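/- For every graph G with minimum degree at least 3, if the subdivision S(G) admits a (1,2,2)-packing coloring then G is bipartite. -/

import Mathlib

/-- An `S`-packing coloring: a map `c : V → Fin k` such that any two distinct
vertices with the same color `i` are at distance greater than `s i`. -/
def SPacking {V : Type*} (G : SimpleGraph V) (k : ℕ) (s : Fin k → ℕ) : Prop :=
  ∃ c : V → Fin k, ∀ u v : V, u ≠ v → c u = c v → G.Reachable u v → s (c u) < G.dist u v

/-- The subdivision of `G`: each edge is replaced by a path of length two
through a new (subdivision) vertex. -/
def Subdiv {V : Type*} (G : SimpleGraph V) : SimpleGraph (V ⊕ G.edgeSet) :=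
  SimpleGraph.fromRel (fun a b => ∃ (v : V) (e : G.edgeSet),
    a = Sum.inl v ∧ b = Sum.inr e ∧ v ∈ (e : Sym2 V))

lemma subdiv_adj {V : Type*} (G : SimpleGraph V) (v : V) (e : G.edgeSet)
    (hv : v ∈ (e : Sym2 V)) : (Subdiv G).Adj (Sum.inl v) (Sum.inr e) := by
  refine ⟨by simp, Or.inl ⟨v, e, rfl, rfl, hv⟩⟩

theorem stmt_12 {V : Type*} [Fintype V] (G : SimpleGraph V) [DecidableRel G.Adj]
    (hmin : ∀ v, 3 ≤ G.degree v) (h : SPacking (Subdiv G) 3 ![1, 2, 2]) :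
    G.Colorable 2 := by
  classical
  obtain ⟨c, hc⟩ := h
  -- edge of an adjacency
  let edg : ∀ {u v : V}, G.Adj u v → G.edgeSet := fun {u v} huv => ⟨s(u, v), huv⟩
  have memL : ∀ {u v : V} (huv : G.Adj u v), u ∈ ((edg huv : G.edgeSet) : Sym2 V) := by
    intro u v huv; exact Sym2.mem_mk_left u v
  have memR : ∀ {u v : V} (huv : G.Adj u v), v ∈ ((edg huv : G.edgeSet) : Sym2 V) := by
    intro u v huv; exact Sym2.mem_mk_right u v
  -- two subdivision vertices incident to a common vertex: distance ≤ 2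
  have dist2e : ∀ (v : V) (e f : G.edgeSet), v ∈ (e : Sym2 V) → v ∈ (f : Sym2 V) →
      (Subdiv G).dist (Sum.inr e) (Sum.inr f) ≤ 2 ∧
      (Subdiv G).Reachable (Sum.inr e) (Sum.inr f) := by
    intro v e f he hf
    let w : (Subdiv G).Walk (Sum.inr e) (Sum.inr f) :=
      SimpleGraph.Walk.cons (subdiv_adj G v e he).symm
        (SimpleGraph.Walk.cons (subdiv_adj G v f hf) SimpleGraph.Walk.nil)
    exact ⟨by simpa [w] using SimpleGraph.dist_le w, w.reachable⟩
  -- no original vertex gets color 0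
  have hne0 : ∀ v : V, c (Sum.inl v) ≠ 0 := by
    intro v hv0
    -- each incident edge's subdivision vertex is colored 1 or 2
    have hcol : ∀ e : G.edgeSet, v ∈ (e : Sym2 V) →
        c (Sum.inr e) = 1 ∨ c (Sum.inr e) = 2 := by
      intro e he
      have hadj := subdiv_adj G v e he
      by_contra hcon
      push_neg at hcon
      have he0 : c (Sum.inr e) = 0 := by omega
      have := hc (Sum.inl v) (Sum.inr e) (by simp) (by rw [hv0, he0])
        hadj.reachable
      rw [hv0] at this
      have hd : (Subdiv G).dist (Sum.inl v) (Sum.inr e) ≤ 1 :=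
        SimpleGraph.dist_le (SimpleGraph.Walk.cons hadj SimpleGraph.Walk.nil)
      simp at this; omega
    -- pigeonhole on neighbors
    have hcard : ({1, 2} : Finset (Fin 3)).card < (G.neighborFinset v).card := by
      have := hmin v
      rw [SimpleGraph.degree] at this
      have : ({1, 2} : Finset (Fin 3)).card = 2 := by decide
      omega
    obtain ⟨w1, hw1, w2, hw2, hne, heq⟩ :=
      Finset.exists_ne_map_eq_of_card_lt_of_maps_to hcard
        (f := fun w => if hw : G.Adj v w then c (Sum.inr (edg hw)) else 0)
        (fun w hw => by
          rw [Finset.mem_coe, SimpleGraph.mem_neighborFinset] at hw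
          simp only [dif_pos hw]
          rcases hcol (edg hw) (memL hw) with h1 | h1 <;> simp [h1])
    rw [SimpleGraph.mem_neighborFinset] at hw1 hw2
    simp only [dif_pos hw1, dif_pos hw2] at heq
    have hef : (edg hw1 : G.edgeSet) ≠ edg hw2 := by
      intro hef
      apply hne
      have : s(v, w1) = s(v, w2) := congrArg Subtype.val hef
      exact (Sym2.congr_right).mp this
    obtain ⟨hd, hr⟩ := dist2e v (edg hw1) (edg hw2) (memL hw1) (memL hw2)
    have := hc _ _ (by simpa using hef) heq hr
    rcases hcol (edg hw1) (memL hw1) with h1 | h1 <;> rw [h1] at this <;> simp at this <;> omega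
  -- adjacent vertices get different colors
  have hdiff : ∀ {u v : V}, G.Adj u v → c (Sum.inl u) ≠ c (Sum.inl v) := by
    intro u v huv heq
    let w : (Subdiv G).Walk (Sum.inl u) (Sum.inl v) :=
      SimpleGraph.Walk.cons (subdiv_adj G u (edg huv) (memL huv))
        (SimpleGraph.Walk.cons (subdiv_adj G v (edg huv) (memR huv)).symm
          SimpleGraph.Walk.nil)
    have hd : (Subdiv G).dist (Sum.inl u) (Sum.inl v) ≤ 2 := by simpa [w] using SimpleGraph.dist_le w
    have := hc _ _ (by simp [huv.ne]) heq w.reachable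
    have h0 := hne0 u
    have key : ∀ a : Fin 3, a ≠ 0 → 2 ≤ (![1, 2, 2] : Fin 3 → ℕ) a := by decide
    have := key _ h0
    omega
  refine ⟨SimpleGraph.Coloring.mk
    (fun v => if c (Sum.inl v) = 1 then (0 : Fin 2) else 1) ?_⟩
  intro u v huv
  have h1 := hne0 u
  have h2 := hne0 v
  have h3 := hdiff huv
  show ¬ (if c (Sum.inl u) = 1 then (0 : Fin 2) else 1) =
      (if c (Sum.inl v) = 1 then (0 : Fin 2) else 1)
  revert h1 h2 h3
  generalize c (Sum.inl u) = a
  generalize c (Sum.inl v) = b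
  revert a b
  decide
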